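/- Let λ > 0 and τ be real, and define for ξ in the upper half-plane ℍ the local plumbing coordinates z(ξ) = exp((πi/λ)·Log((ξ·sinh(λ/2) + cosh(λ/2))/(−ξ·sinh(λ/2) + cosh(λ/2)))) and w(ξ) = exp((πi/λ)·Log((ξ·cosh(λ/2) − sinh(λ/2))/(ξ·cosh(λ/2) + sinh(λ/2)))), where Log is the principal branch of the complex logarithm. Then for every ζ ∈ ℍ, the Möbius image T(λ,τ)·ζ lies in ℍ and z(T(λ,τ)·ζ) · w(ζ) = e^{−π²/λ} · e^{−πiτ/λ}. -/

import Mathlib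

open Matrix

/-- `T(λ,τ) = [[cosh(τ/2)·coth(λ/2), −sinh(τ/2)], [−sinh(τ/2), cosh(τ/2)·tanh(λ/2)]]` -/
noncomputable def Tmat (l τ : ℂ) : Matrix (Fin 2) (Fin 2) ℂ :=
  !![Complex.cosh (τ/2) * (Complex.cosh (l/2) / Complex.sinh (l/2)), -Complex.sinh (τ/2);
     -Complex.sinh (τ/2), Complex.cosh (τ/2) * (Complex.sinh (l/2) / Complex.cosh (l/2))]

/-- The Möbius action of a 2×2 matrix on ℂ. -/
noncomputable def moebius (M : Matrix (Fin 2) (Fin 2) ℂ) (z : ℂ) : ℂ :=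
  (M 0 0 * z + M 0 1) / (M 1 0 * z + M 1 1)

/-- The local plumbing coordinate
`z(ξ) = exp((πi/λ)·Log((ξ·sinh(λ/2) + cosh(λ/2))/(−ξ·sinh(λ/2) + cosh(λ/2))))`. -/
noncomputable def zCoord (l : ℝ) (ξ : ℂ) : ℂ :=
  Complex.exp ((Real.pi * Complex.I / l) *
    Complex.log ((ξ * Complex.sinh (l/2) + Complex.cosh (l/2)) /
      (-ξ * Complex.sinh (l/2) + Complex.cosh (l/2))))

/-- The local plumbing coordinate
`w(ξ) = exp((πi/λ)·Log((ξ·cosh(λ/2) − sinh(λ/2))/(ξ·cosh(λ/2) + sinh(λ/2))))`. -/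
noncomputable def wCoord (l : ℝ) (ξ : ℂ) : ℂ :=
  Complex.exp ((Real.pi * Complex.I / l) *
    Complex.log ((ξ * Complex.cosh (l/2) - Complex.sinh (l/2)) /
      (ξ * Complex.cosh (l/2) + Complex.sinh (l/2))))

lemma aux_int_zero (k : ℤ) (h1 : -Real.pi < 2*Real.pi*(k:ℝ)) (h2 : 2*Real.pi*(k:ℝ) < Real.pi) :
    k = 0 := by
  have hπ := Real.pi_pos
  by_contra h
  rcases lt_or_gt_of_ne h with hlt | hgt
  · have hk' : k ≤ -1 := by omega
    have hk : (k:ℝ) ≤ -1 := by exact_mod_cast hk'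
    nlinarith
  · have hk : (1:ℝ) ≤ (k:ℝ) := by exact_mod_cast hgt
    nlinarith

lemma moebius_im_aux (a b c d : ℝ) (z : ℂ) :
    (((a:ℂ) * z + b) / ((c:ℂ) * z + d)).im
      = (a * d - b * c) * z.im / Complex.normSq ((c:ℂ) * z + d) := by
  rw [Complex.div_im, div_sub_div_same]
  congr 1
  simp [Complex.add_im, Complex.add_re, Complex.mul_re, Complex.mul_im]
  ring

set_option maxHeartbeats 1000000 in
theorem plumbing_parameter (l τ : ℝ) (hl : 0 < l) (ζ : ℂ) (hζ : 0 < ζ.im) :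
    0 < (moebius (Tmat l τ) ζ).im ∧
    zCoord l (moebius (Tmat l τ) ζ) * wCoord l ζ =
      Complex.exp (-(Real.pi ^ 2) / l) *
        Complex.exp (-(Real.pi * Complex.I * τ) / l) := by
  set s := Real.sinh (l/2) with hs_def
  set c := Real.cosh (l/2) with hc_def
  set S := Real.sinh (τ/2) with hS_def
  set C := Real.cosh (τ/2) with hC_def
  have hs : 0 < s := by positivity
  have hc : 0 < c := Real.cosh_pos _
  have hC : 0 < C := Real.cosh_pos _
  have hCS : C ^ 2 - S ^ 2 = 1 := by
    rw [hS_def, hC_def]; exact Real.cosh_sq_sub_sinh_sq _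
  have hsl : Complex.sinh ((l:ℂ)/2) = (s:ℂ) := by
    rw [hs_def, Complex.ofReal_sinh]; norm_num
  have hcl : Complex.cosh ((l:ℂ)/2) = (c:ℂ) := by
    rw [hc_def, Complex.ofReal_cosh]; norm_num
  have hSt : Complex.sinh ((τ:ℂ)/2) = (S:ℂ) := by
    rw [hS_def, Complex.ofReal_sinh]; norm_num
  have hCt : Complex.cosh ((τ:ℂ)/2) = (C:ℂ) := by
    rw [hC_def, Complex.ofReal_cosh]; norm_num
  -- the moebius image
  have hξdef : moebius (Tmat l τ) ζ =
      (((C*(c/s) : ℝ):ℂ) * ζ + ((-S : ℝ):ℂ)) / (((-S:ℝ):ℂ) * ζ + ((C*(s/c):ℝ):ℂ)) := by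
    simp [moebius, Tmat, hsl, hcl, hSt, hCt]
  set ξ := moebius (Tmat l τ) ζ with hξ_def
  -- denominator nonzero
  have hD : (((-S:ℝ):ℂ) * ζ + ((C*(s/c):ℝ):ℂ)) ≠ 0 := by
    intro h
    have him := congrArg Complex.im h
    have hre := congrArg Complex.re h
    simp [Complex.add_im, Complex.mul_im, Complex.add_re, Complex.mul_re] at him hre
    have hS0 : S = 0 := by
      rcases him with h' | h'
      · linarith
      · exact absurd h' (ne_of_gt hζ)
    rw [hS0] at hre
    have : C * (s / c) > 0 := by positivity
    nlinarith [hre]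
  -- imaginary part of ξ
  have hξim : 0 < ξ.im := by
    rw [hξdef, moebius_im_aux]
    have hdet : C*(c/s) * (C*(s/c)) - -S * -S = 1 := by
      field_simp
      linear_combination hCS
    rw [hdet, one_mul]
    have : 0 < Complex.normSq (((-S:ℝ):ℂ) * ζ + ((C*(s/c):ℝ):ℂ)) :=
      Complex.normSq_pos.2 hD
    positivity
  refine ⟨hξim, ?_⟩
  -- the two log arguments
  set A : ℂ := (ξ * (s:ℂ) + (c:ℂ)) / (-ξ * (s:ℂ) + (c:ℂ)) with hA_def
  set B : ℂ := (ζ * (c:ℂ) - (s:ℂ)) / (ζ * (c:ℂ) + (s:ℂ)) with hB_def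
  have hzw : zCoord l ξ * wCoord l ζ =
      Complex.exp ((Real.pi * Complex.I / l) * (Complex.log A + Complex.log B)) := by
    rw [zCoord, wCoord, hsl, hcl, ← Complex.exp_add, ← hA_def, ← hB_def]
    ring_nf
  -- nonvanishing of auxiliary denominators
  have hD2 : -ξ * (s:ℂ) + (c:ℂ) ≠ 0 := by
    intro h
    have := congrArg Complex.im h
    simp [Complex.add_im, Complex.mul_im] at this
    rcases this with h' | h'
    · linarith
    · nlinarith [hξim]
  have hDB : ζ * (c:ℂ) + (s:ℂ) ≠ 0 := by
    intro h
    have := congrArg Complex.im h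
    simp [Complex.add_im, Complex.mul_im] at this
    rcases this with h' | h'
    · nlinarith [hζ]
    · linarith
  have hsc : ((s:ℂ)) - (c:ℂ) * ζ ≠ 0 := by
    intro h
    have := congrArg Complex.im h
    simp [Complex.sub_im, Complex.mul_im] at this
    rcases this with h' | h'
    · linarith
    · nlinarith [hζ]
  -- A in closed form
  have hsC : (s:ℂ) ≠ 0 := by exact_mod_cast hs.ne'
  have hcC : (c:ℂ) ≠ 0 := by exact_mod_cast hc.ne'
  have hDp : ((-(S:ℂ)))*(s:ℂ)*(c:ℂ)*ζ + (C:ℂ)*(s:ℂ)^2 ≠ 0 := by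
    have he : ((-(S:ℂ)))*(s:ℂ)*(c:ℂ)*ζ + (C:ℂ)*(s:ℂ)^2
        = ((s:ℂ)*(c:ℂ)) * (((-S:ℝ):ℂ) * ζ + ((C*(s/c):ℝ):ℂ)) := by
      push_cast
      field_simp
    rw [he]
    exact mul_ne_zero (mul_ne_zero hsC hcC) hD
  have hξ2 : ξ = ((C:ℂ)*(c:ℂ)^2*ζ - (S:ℂ)*(s:ℂ)*(c:ℂ)) /
      (((-(S:ℂ)))*(s:ℂ)*(c:ℂ)*ζ + (C:ℂ)*(s:ℂ)^2) := by
    rw [hξdef, div_eq_div_iff hD hDp]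
    push_cast
    field_simp
    ring
  have hCpS : ((C:ℂ) + S) ≠ 0 := by
    have h0 : (0:ℝ) < C + S := by nlinarith [hCS]
    exact_mod_cast h0.ne'
  have hξmul : ξ * (((-(S:ℂ)))*(s:ℂ)*(c:ℂ)*ζ + (C:ℂ)*(s:ℂ)^2)
      = (C:ℂ)*(c:ℂ)^2*ζ - (S:ℂ)*(s:ℂ)*(c:ℂ) := by
    rw [hξ2, div_mul_cancel₀ _ hDp]
  have hdenR : ((C:ℂ)+S) * ((s:ℂ) - (c:ℂ)*ζ) ≠ 0 := mul_ne_zero hCpS hsc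
  have hA : A = (((C:ℂ) - S) * ((c:ℂ)*ζ + s)) / (((C:ℂ) + S) * ((s:ℂ) - (c:ℂ)*ζ)) := by
    rw [hA_def, div_eq_div_iff hD2 hdenR]
    apply mul_right_cancel₀ hDp
    linear_combination ((s:ℂ)*(((C:ℂ)+S) * ((s:ℂ) - (c:ℂ)*ζ))
      + (s:ℂ)*(((C:ℂ)-S) * ((c:ℂ)*ζ + (s:ℂ)))) * hξmul
  have hC2c : (C:ℂ)^2 - (S:ℂ)^2 = 1 := by exact_mod_cast hCS
  have hAB : A * B = -((C:ℂ) - S)^2 := by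
    rw [hA, hB_def, div_mul_div_comm, div_eq_iff (mul_ne_zero hdenR hDB)]
    linear_combination (-((C:ℂ)-S)*((c:ℂ)*ζ+(s:ℂ))*((c:ℂ)*ζ-(s:ℂ))) * hC2c
  -- rewrite the constant as a real exponential
  have h2 : ((C:ℝ) - S)^2 = Real.exp (-τ) := by
    rw [hC_def, hS_def, Real.cosh_sub_sinh, sq, ← Real.exp_add]
    ring_nf
  have hABr : A * B = ((-Real.exp (-τ) : ℝ) : ℂ) := by
    rw [hAB, ← h2]
    push_cast
    ring
  -- imaginary parts of A and B are positive
  have hAim : 0 < A.im := by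
    have hform : A = (((s:ℝ):ℂ)*ξ + ((c:ℝ):ℂ)) / ((((-s):ℝ):ℂ)*ξ + ((c:ℝ):ℂ)) := by
      rw [hA_def]; push_cast; ring_nf
    have hne : (((-s):ℝ):ℂ)*ξ + ((c:ℝ):ℂ) ≠ 0 := by
      intro h; apply hD2; rw [← h]; push_cast; ring
    rw [hform, moebius_im_aux]
    have h1 : 0 < s * c - c * (-s) := by nlinarith
    have h0 : 0 < Complex.normSq ((((-s):ℝ):ℂ)*ξ + ((c:ℝ):ℂ)) := Complex.normSq_pos.2 hne
    exact div_pos (mul_pos h1 hξim) h0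
  have hBim : 0 < B.im := by
    have hform : B = (((c:ℝ):ℂ)*ζ + (((-s):ℝ):ℂ)) / (((c:ℝ):ℂ)*ζ + ((s:ℝ):ℂ)) := by
      rw [hB_def]; push_cast; ring_nf
    have hne : ((c:ℝ):ℂ)*ζ + ((s:ℝ):ℂ) ≠ 0 := by
      intro h; apply hDB; rw [← h]; push_cast; ring
    rw [hform, moebius_im_aux]
    have h1 : 0 < c * s - (-s) * c := by nlinarith
    have h0 : 0 < Complex.normSq (((c:ℝ):ℂ)*ζ + ((s:ℝ):ℂ)) := Complex.normSq_pos.2 hne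
    exact div_pos (mul_pos h1 hζ) h0
  have hA0 : A ≠ 0 := by intro h; rw [h] at hAim; simp at hAim
  have hB0 : B ≠ 0 := by intro h; rw [h] at hBim; simp at hBim
  -- arguments
  have hargA1 : 0 < Complex.arg A := by
    rcases (Complex.arg_nonneg_iff.2 hAim.le).lt_or_eq with h | h
    · exact h
    · exact absurd (Complex.arg_eq_zero_iff.1 h.symm).2 hAim.ne'
  have hargB1 : 0 < Complex.arg B := by
    rcases (Complex.arg_nonneg_iff.2 hBim.le).lt_or_eq with h | h
    · exact h
    · exact absurd (Complex.arg_eq_zero_iff.1 h.symm).2 hBim.ne'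
  have hargA2 : Complex.arg A < Real.pi := Complex.arg_lt_pi_iff.2 (Or.inr hAim.ne')
  have hargB2 : Complex.arg B < Real.pi := Complex.arg_lt_pi_iff.2 (Or.inr hBim.ne')
  have hexpneg : -Real.exp (-τ) < 0 := neg_lt_zero.2 (Real.exp_pos _)
  have hargABπ : Complex.arg (A*B) = Real.pi := by
    rw [hABr]; exact Complex.arg_ofReal_of_neg hexpneg
  -- argument sum is exactly π
  have hang := Complex.arg_mul_coe_angle hA0 hB0
  rw [hargABπ, ← Real.Angle.coe_add] at hang
  obtain ⟨k, hk⟩ := Real.Angle.angle_eq_iff_two_pi_dvd_sub.1 hang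
  have hk0 : k = 0 := by
    apply aux_int_zero
    · linarith [hargA2, hargB2]
    · linarith [hargA1, hargB1]
  rw [hk0] at hk
  have hsum : Complex.arg A + Complex.arg B = Real.pi := by
    push_cast at hk; linarith
  -- the log identity
  have hlogAB : Complex.log (((-Real.exp (-τ) : ℝ)) : ℂ)
      = -(τ:ℂ) + Real.pi * Complex.I := by
    apply Complex.ext
    · rw [Complex.log_re, Complex.norm_real, Real.norm_eq_abs, abs_of_neg hexpneg, neg_neg, Real.log_exp]
      simp
    · rw [Complex.log_im, Complex.arg_ofReal_of_neg hexpneg]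
      simp
  have hlog : Complex.log A + Complex.log B = -(τ:ℂ) + Real.pi * Complex.I := by
    rw [← Complex.log_mul hA0 hB0 (by rw [hsum]; exact ⟨by linarith, le_refl _⟩), hABr, hlogAB]
  -- assemble
  rw [hzw, hlog, ← Complex.exp_add]
  congr 1
  have hlC : (l:ℂ) ≠ 0 := by exact_mod_cast hl.ne'
  field_simp
  ring_nf
  linear_combination (Real.pi:ℂ) * Complex.I_sq
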